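/- Let Λ: {F_1,…,F_m} → ℤ₂^r be a vector-colouring of a simple n-polytope P, and suppose Λ_{j_1},…,Λ_{j_r} form a basis of ℤ₂^r. Then the manifold M(P,Λ) is orientable if and only if every Λ_i is a linear combination of an odd number of the basis vectors Λ_{j_1},…,Λ_{j_r}. -/

import Mathlib

/-- Let `Λ : {F_1,…,F_m} → ℤ₂^r` be a vector-colouring of a simple
`n`-polytope `P` (condition (*): for each vertex, given by the set of the `n` facets
containing it, the corresponding vectors are linearly independent), and suppose
`Λ_{j 1}, …, Λ_{j r}` form a basis `B` of `ℤ₂^r`.  The manifold `M(P,Λ)` is orientable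
iff one can choose orientations (a parity function `o` on the `2^r` copies of `P`) so that
copies glued along a facet carry opposite orientations, i.e. `o (a + Λ i) = o a + 1`.
Theorem: `M(P,Λ)` is orientable iff every `Λ i` is a linear combination of an odd number
of the basis vectors, i.e. the sum of the coordinates of `Λ i` in the basis `B` is `1`. -/
theorem stmt_1 (m n r : ℕ) (hr : 0 < r)
    (IsVertex : Finset (Fin m) → Prop)
    (Λ : Fin m → (Fin r → ZMod 2))
    (hspan : Submodule.span (ZMod 2) (Set.range Λ) = ⊤)
    (hstar : ∀ S : Finset (Fin m), IsVertex S → S.card = n →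
      LinearIndependent (ZMod 2) (fun i : S => Λ i))
    (j : Fin r → Fin m)
    (B : Module.Basis (Fin r) (ZMod 2) (Fin r → ZMod 2)) (hB : ∀ s, B s = Λ (j s)) :
    (∃ o : (Fin r → ZMod 2) → ZMod 2, ∀ a i, o (a + Λ i) = o a + 1) ↔
      ∀ i, (∑ s, B.repr (Λ i) s) = 1 := by
  constructor
  · rintro ⟨o, ho⟩ i
    -- key step lemma: adding c • Λ k changes o by c
    have step : ∀ (a : Fin r → ZMod 2) (c : ZMod 2) (k : Fin m),
        o (a + c • Λ k) = o a + c := by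
      intro a c k
      have hc : c = 0 ∨ c = 1 := by
        revert c; decide
      rcases hc with h | h <;> subst h
      · simp
      · simpa using ho a k
    -- by induction, o of a sum of c s • Λ (j s) over T is o 0 + ∑ c s
    have key : ∀ (T : Finset (Fin r)) (c : Fin r → ZMod 2),
        o (∑ s ∈ T, c s • Λ (j s)) = o 0 + ∑ s ∈ T, c s := by
      intro T
      induction T using Finset.induction_on with
      | empty => intro c; simp
      | insert x T' hx ih =>
          intro c
          rw [Finset.sum_insert hx, Finset.sum_insert hx, add_comm (c x • Λ (j x)),
            step, ih]
          ring
    have hrep : Λ i = ∑ s, B.repr (Λ i) s • Λ (j s) := by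
      conv_lhs => rw [← B.sum_repr (Λ i)]
      exact Finset.sum_congr rfl fun s _ => by rw [hB]
    have h1 : o (Λ i) = o 0 + 1 := by simpa using ho 0 i
    have h2 : o (Λ i) = o 0 + ∑ s, B.repr (Λ i) s := by
      have := key Finset.univ (fun s => B.repr (Λ i) s)
      rwa [← hrep] at this
    have := h1.symm.trans h2
    exact (add_left_cancel this).symm
  · intro h
    refine ⟨fun a => ∑ s, B.repr a s, fun a i => ?_⟩
    simp only [map_add, Finsupp.coe_add, Pi.add_apply, Finset.sum_add_distrib, h i]
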